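/- The Rényi α-divergence between two multivariate Gaussians N(μ_1, σ²I_k) and N(μ_2, σ²I_k) equals α ||μ_1 - μ_2||_2² / (2σ²). Consequently, if ||q(D) - q(D')||_2 ≤ Δ for all neighboring D ~ D' and σ² ≥ α Δ² / (2ε), then the mechanism releasing N(q(D), σ²I_k) satisfies (α, ε)-RDP. -/

import Mathlib

open MeasureTheory Real

/-- Density of the multivariate Gaussian `N(μ, σ² I_k)` on `ℝ^k`. -/
noncomputable def gaussPdf {k : ℕ} (μ : EuclideanSpace ℝ (Fin k)) (σ2 : ℝ)
    (x : EuclideanSpace ℝ (Fin k)) : ℝ :=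
  (2 * π * σ2) ^ (-(k : ℝ) / 2) * Real.exp (-‖x - μ‖ ^ 2 / (2 * σ2))

/-- Rényi `α`-divergence between `N(μ₁, σ²I)` and `N(μ₂, σ²I)`,
`D_α(P₁‖P₂) = (α-1)⁻¹ log ∫ P₁(x)^α P₂(x)^(1-α) dx`. -/
noncomputable def renyiDivGauss {k : ℕ} (α : ℝ)
    (μ₁ μ₂ : EuclideanSpace ℝ (Fin k)) (σ2 : ℝ) : ℝ :=
  (α - 1)⁻¹ *
    Real.log (∫ x : EuclideanSpace ℝ (Fin k),
      gaussPdf μ₁ σ2 x ^ α * gaussPdf μ₂ σ2 x ^ (1 - α))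

local notation "⟪" x ", " y "⟫" => @inner ℝ _ _ x y

/-- The Gaussian density integrates to `1`. -/
lemma integral_gaussPdf {k : ℕ} (μ : EuclideanSpace ℝ (Fin k)) {σ2 : ℝ} (hσ2 : 0 < σ2) :
    ∫ x : EuclideanSpace ℝ (Fin k), gaussPdf μ σ2 x = 1 := by
  unfold gaussPdf
  rw [integral_const_mul]
  have h : ∀ y : EuclideanSpace ℝ (Fin k), -‖y - μ‖ ^ 2 / (2 * σ2)
      = -(2 * σ2)⁻¹ * ‖y - μ‖ ^ 2 := by
    intro y; field_simp
  simp only [h]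
  rw [integral_sub_right_eq_self (fun y : EuclideanSpace ℝ (Fin k) =>
    Real.exp (-(2 * σ2)⁻¹ * ‖y‖ ^ 2)) μ]
  rw [GaussianFourier.integral_rexp_neg_mul_sq_norm (by positivity)]
  rw [finrank_euclideanSpace_fin]
  have : π / (2 * σ2)⁻¹ = 2 * π * σ2 := by field_simp
  rw [this, ← Real.rpow_add (by positivity)]
  rw [neg_div, neg_add_cancel, Real.rpow_zero]

/-- The parallelogram-type identity underlying the Gaussian Rényi computation. -/
lemma key_identity {k : ℕ} (α : ℝ) (μ₁ μ₂ x : EuclideanSpace ℝ (Fin k)) :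
    α * ‖x - μ₁‖ ^ 2 + (1 - α) * ‖x - μ₂‖ ^ 2
      = ‖x - (α • μ₁ + (1 - α) • μ₂)‖ ^ 2 + α * (1 - α) * ‖μ₁ - μ₂‖ ^ 2 := by
  have h : ∀ a b : EuclideanSpace ℝ (Fin k),
      ‖a - b‖ ^ 2 = ⟪a, a⟫ - 2 * ⟪a, b⟫ + ⟪b, b⟫ := by
    intro a b
    rw [norm_sub_sq_real, ← real_inner_self_eq_norm_sq, ← real_inner_self_eq_norm_sq]
  rw [h, h, h, h]
  simp only [inner_add_left, inner_add_right, real_inner_smul_left, real_inner_smul_right]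
  rw [real_inner_comm μ₂ μ₁]
  ring

/-- Pointwise reduction of the tilted product of two Gaussian densities. -/
lemma gauss_pointwise {k : ℕ} (α : ℝ) (μ₁ μ₂ : EuclideanSpace ℝ (Fin k)) {σ2 : ℝ}
    (hσ2 : 0 < σ2) (x : EuclideanSpace ℝ (Fin k)) :
    gaussPdf μ₁ σ2 x ^ α * gaussPdf μ₂ σ2 x ^ (1 - α)
      = Real.exp (-(α * (1 - α) * ‖μ₁ - μ₂‖ ^ 2) / (2 * σ2))
        * gaussPdf (α • μ₁ + (1 - α) • μ₂) σ2 x := by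
  unfold gaussPdf
  have hc : (0:ℝ) < (2 * π * σ2) ^ (-(k : ℝ) / 2) := by positivity
  rw [Real.mul_rpow hc.le (Real.exp_pos _).le, Real.mul_rpow hc.le (Real.exp_pos _).le,
      ← Real.exp_mul, ← Real.exp_mul, mul_mul_mul_comm]
  have hcc : ((2 * π * σ2) ^ (-(k : ℝ) / 2)) ^ α * ((2 * π * σ2) ^ (-(k : ℝ) / 2)) ^ (1 - α)
      = (2 * π * σ2) ^ (-(k : ℝ) / 2) := by
    rw [← Real.rpow_add hc]; norm_num
  have hk := key_identity α μ₁ μ₂ x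
  have hexp : (-‖x - μ₁‖ ^ 2 / (2 * σ2)) * α + (-‖x - μ₂‖ ^ 2 / (2 * σ2)) * (1 - α)
      = -(α * (1 - α) * ‖μ₁ - μ₂‖ ^ 2) / (2 * σ2)
        + -‖x - (α • μ₁ + (1 - α) • μ₂)‖ ^ 2 / (2 * σ2) := by
    field_simp
    linear_combination (-1) * hk
  rw [hcc, ← Real.exp_add, hexp, Real.exp_add]
  ring

/-- The closed form of the Gaussian Rényi divergence. -/
lemma renyiDivGauss_eq {k : ℕ} (α : ℝ) (μ₁ μ₂ : EuclideanSpace ℝ (Fin k)) {σ2 : ℝ}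
    (hα : 1 < α) (hσ2 : 0 < σ2) :
    renyiDivGauss α μ₁ μ₂ σ2 = α * ‖μ₁ - μ₂‖ ^ 2 / (2 * σ2) := by
  unfold renyiDivGauss
  simp only [gauss_pointwise α μ₁ μ₂ hσ2]
  rw [integral_const_mul, integral_gaussPdf _ hσ2, mul_one, Real.log_exp]
  have hα1 : α - 1 ≠ 0 := by linarith
  field_simp
  ring

/-- The Rényi `α`-divergence between `N(μ₁,σ²I_k)` and `N(μ₂,σ²I_k)` equals
`α‖μ₁-μ₂‖²/(2σ²)`; consequently the Gaussian mechanism with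
`σ² ≥ αΔ²/(2ε)` satisfies `(α,ε)`-RDP. -/
theorem renyiDivGauss_eq_and_gaussian_mechanism_rdp {k : ℕ} (α σ2 : ℝ)
    (hα : 1 < α) (hσ2 : 0 < σ2) :
    (∀ μ₁ μ₂ : EuclideanSpace ℝ (Fin k),
      renyiDivGauss α μ₁ μ₂ σ2 = α * ‖μ₁ - μ₂‖ ^ 2 / (2 * σ2)) ∧
    (∀ {Dataset : Type} (Nbr : Dataset → Dataset → Prop)
      (q : Dataset → EuclideanSpace ℝ (Fin k)) (Δ ε : ℝ), 0 < ε →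
      (∀ D D', Nbr D D' → ‖q D - q D'‖ ≤ Δ) →
      σ2 ≥ α * Δ ^ 2 / (2 * ε) →
      ∀ D D', Nbr D D' → renyiDivGauss α (q D) (q D') σ2 ≤ ε) := by
  constructor
  · intro μ₁ μ₂
    exact renyiDivGauss_eq α μ₁ μ₂ hα hσ2
  · intro Dataset Nbr q Δ ε hε hΔ hσ D D' hDD'
    rw [renyiDivGauss_eq α _ _ hα hσ2]
    have hn := hΔ D D' hDD'
    have h0 : (0:ℝ) ≤ ‖q D - q D'‖ := norm_nonneg _
    have h1 : ‖q D - q D'‖ ^ 2 ≤ Δ ^ 2 := by nlinarith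
    have h2 : α * Δ ^ 2 ≤ σ2 * (2 * ε) := by
      rw [ge_iff_le, div_le_iff₀ (by positivity)] at hσ
      exact hσ
    rw [div_le_iff₀ (by positivity)]
    nlinarith
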